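/- Define J* : ℝ³×ℝ³ → ℝ by J*(ω,v) = (1/2)·‖t(exp(X(ω,v)))‖², where t(g) ∈ ℝ³ is the top-right 3×1 block of the 4×4 matrix g. Let R ≥ 2 and suppose L′ ≥ 0 is such that ‖∇J*(θ) − ∇J*(θ′)‖ ≤ L′·‖θ − θ′‖ for all θ, θ′ ∈ ℝ³×ℝ³ with ‖θ‖ ≤ R and ‖θ′‖ ≤ R (6-vector Euclidean norm). Then L′ ≥ (3/8)·(8·sin 1 + 10·cos 1 − 12)·R²; in particular L′ ≥ 0.0505·R². -/

import Mathlib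

open scoped Matrix
open NormedSpace
open scoped RealInnerProductSpace

/-- ℝ³ with the Euclidean norm. -/
abbrev E3 := EuclideanSpace ℝ (Fin 3)

/-- ℝ³ × ℝ³ with the 6-vector Euclidean norm `√(‖ω‖² + ‖v‖²)`. -/
abbrev D6 := WithLp 2 (E3 × E3)

/-- The hat map: `hat ω` is the skew-symmetric matrix with `hat ω *ᵥ x = ω × x`. -/
def hat (ω : E3) : Matrix (Fin 3) (Fin 3) ℝ :=
  !![0, -ω 2, ω 1; ω 2, 0, -ω 0; -ω 1, ω 0, 0]

/-- The homogeneous 4×4 representation of the se(3) element `(ω, v)`. -/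
def seX (ω v : E3) : Matrix (Fin 4) (Fin 4) ℝ :=
  Matrix.of fun i j =>
    if hi : (i : ℕ) < 3 then
      if hj : (j : ℕ) < 3 then hat ω ⟨i, hi⟩ ⟨j, hj⟩ else v ⟨i, hi⟩
    else 0

/-- The translation part of a 4×4 matrix: its top-right 3×1 block, as a Euclidean vector. -/
noncomputable def tPart (g : Matrix (Fin 4) (Fin 4) ℝ) : E3 :=
  (WithLp.equiv 2 (Fin 3 → ℝ)).symm fun i => g i.castSucc (Fin.last 3)

/-- The translation-distance objective `J*(ω,v) = ½‖t(exp X(ω,v))‖²`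
as a function of the 6-vector `θ = (ω,v)`. -/
noncomputable def Jstar (θ : D6) : ℝ :=
  (1 / 2) * ‖tPart (NormedSpace.exp (seX (WithLp.equiv 2 (E3 × E3) θ).1
    (WithLp.equiv 2 (E3 × E3) θ).2))‖ ^ 2

/-! ### Auxiliary material -/

section Aux

set_option linter.unreachableTactic false
set_option linter.unusedTactic false
set_option linter.unnecessarySeqFocus false

/-- Matrix exponential of a 4×4 real matrix with `C³ = -c²·C`. -/
lemma exp_of_cube (C : Matrix (Fin 4) (Fin 4) ℝ) (c : ℝ) (hc : c ≠ 0)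
    (hC : C ^ 3 = (-(c ^ 2)) • C) :
    NormedSpace.exp C = 1 + (Real.sin c / c) • C + ((1 - Real.cos c) / c ^ 2) • C ^ 2 := by
  letI : SeminormedRing (Matrix (Fin 4) (Fin 4) ℝ) := Matrix.linftyOpSemiNormedRing
  letI : NormedRing (Matrix (Fin 4) (Fin 4) ℝ) := Matrix.linftyOpNormedRing
  letI : NormedAlgebra ℝ (Matrix (Fin 4) (Fin 4) ℝ) := Matrix.linftyOpNormedAlgebra
  set M : ℝ → Matrix (Fin 4) (Fin 4) ℝ := fun t =>
    1 + (Real.sin (t * c) / c) • C + ((1 - Real.cos (t * c)) / c ^ 2) • C ^ 2 with hM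
  have h2 : C * C = C ^ 2 := (sq C).symm
  have h3 : C * C ^ 2 = C ^ 3 := by rw [← h2]; rw [pow_succ, ← h2, mul_assoc]
  have hCM : ∀ t, C * M t = Real.cos (t * c) • C + (Real.sin (t * c) / c) • C ^ 2 := by
    intro t
    simp only [hM, mul_add, mul_one, mul_smul_comm, h2, h3, hC]
    match_scalars <;> field_simp <;> ring
  have hMd : ∀ t, HasDerivAt M (Real.cos (t * c) • C + (Real.sin (t * c) / c) • C ^ 2) t := by
    intro t
    have hmul : HasDerivAt (fun t : ℝ => t * c) (1 * c) t := (hasDerivAt_id t).mul_const c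
    have hs : HasDerivAt (fun t : ℝ => Real.sin (t * c) / c) (Real.cos (t * c)) t := by
      have := hmul.sin.div_const c
      rw [one_mul] at this
      simpa [mul_div_cancel_right₀ _ hc] using this
    have hcψ : HasDerivAt (fun t : ℝ => (1 - Real.cos (t * c)) / c ^ 2)
        (Real.sin (t * c) / c) t := by
      have := (hmul.cos.const_sub 1).div_const (c ^ 2)
      rw [one_mul] at this
      refine this.congr_deriv ?_
      field_simp
    have := ((hs.smul_const C).const_add 1).add (hcψ.smul_const (C ^ 2))
    exact this.congr_of_eventuallyEq (Filter.Eventually.of_forall fun s => by simp [hM, add_assoc])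
  set G : ℝ → Matrix (Fin 4) (Fin 4) ℝ := fun t => NormedSpace.exp (t • (-C)) * M t with hG
  have hGd : ∀ t, HasDerivAt G 0 t := by
    intro t
    have h1 : HasDerivAt (fun u : ℝ => NormedSpace.exp (u • (-C))) (NormedSpace.exp (t • (-C)) * (-C)) t :=
      hasDerivAt_exp_smul_const (-C) t
    have := h1.mul (hMd t)
    refine this.congr_deriv ?_
    rw [mul_assoc, ← mul_add, neg_mul, hCM t]
    have hz : (-(Real.cos (t * c) • C + (Real.sin (t * c) / c) • C ^ 2) +
        (Real.cos (t * c) • C + (Real.sin (t * c) / c) • C ^ 2)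
          : Matrix (Fin 4) (Fin 4) ℝ) = 0 := by abel
    rw [hz, mul_zero]
  have hconst : G 1 = G 0 := by
    have hfd : ∀ x, fderiv ℝ G x = 0 := by
      intro x
      have : HasFDerivAt G ((1 : ℝ →L[ℝ] ℝ).smulRight (0 : Matrix (Fin 4) (Fin 4) ℝ)) x :=
        (hGd x).hasFDerivAt
      rw [this.fderiv]
      ext s
      simp
    exact is_const_of_fderiv_eq_zero (fun x => (hGd x).differentiableAt) hfd 1 0
  have hG0 : G 0 = 1 := by simp [hG, hM]
  have hG1 : NormedSpace.exp (-C) * M 1 = 1 := by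
    have := hconst.trans hG0
    simpa [hG] using this
  have hinv : NormedSpace.exp C * NormedSpace.exp (-C) = 1 := by
    rw [← Matrix.exp_add_of_commute C (-C) (Commute.neg_right (Commute.refl C))]
    simp
  have hfin : NormedSpace.exp C * (NormedSpace.exp (-C) * M 1) = NormedSpace.exp C := by rw [hG1, mul_one]
  rw [← mul_assoc, hinv, one_mul] at hfin
  rw [← hfin, hM]
  norm_num

/-- `(x, 0, 0)` as a Euclidean vector. -/
noncomputable def ev (x : ℝ) : E3 := (WithLp.equiv 2 (Fin 3 → ℝ)).symm ![x, 0, 0]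

/-- `(0, w, 0)` as a Euclidean vector. -/
noncomputable def wv (w : ℝ) : E3 := (WithLp.equiv 2 (Fin 3 → ℝ)).symm ![0, w, 0]

/-- The concrete se(3) matrix of `((x,0,0), (0,w,0))`. -/
def Am (x w : ℝ) : Matrix (Fin 4) (Fin 4) ℝ :=
  !![0,0,0,0; 0,0,-x,w; 0,x,0,0; 0,0,0,0]

lemma seX_eq (x w : ℝ) : seX (ev x) (wv w) = Am x w := by
  ext i j
  fin_cases i <;> fin_cases j <;>
    (try simp [seX, hat, Am, ev, wv, WithLp.equiv_symm_apply, PiLp.toLp_apply, Matrix.vecHead,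
      Matrix.vecTail]) <;>
    exact fun h => absurd h (by decide)

lemma Am_sq (x w : ℝ) : (Am x w) ^ 2 =
    !![0,0,0,0; 0,-x^2,0,0; 0,0,-x^2,x*w; 0,0,0,0] := by
  rw [sq]
  ext i j
  fin_cases i <;> fin_cases j <;>
    simp [Am, Matrix.mul_apply, Fin.sum_univ_four, Matrix.vecHead, Matrix.vecTail] <;> ring

lemma Am_cube (x w : ℝ) : (Am x w) ^ 3 = (-(x ^ 2)) • Am x w := by
  rw [pow_succ, Am_sq]
  ext i j
  fin_cases i <;> fin_cases j <;>
    simp [Am, Matrix.mul_apply, Fin.sum_univ_four, Matrix.vecHead, Matrix.vecTail] <;> ring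

/-- The two-parameter family of 6-vectors `((x,0,0),(0,w,0))`. -/
noncomputable def Pp (x w : ℝ) : D6 := (WithLp.equiv 2 (E3 × E3)).symm (ev x, wv w)

lemma Jstar_P (x w : ℝ) (hx : x ≠ 0) :
    Jstar (Pp x w) = w ^ 2 * (1 - Real.cos x) / x ^ 2 := by
  have hexp : NormedSpace.exp (Am x w) = 1 + (Real.sin x / x) • Am x w
      + ((1 - Real.cos x) / x ^ 2) • (Am x w) ^ 2 :=
    exp_of_cube _ x hx (Am_cube x w)
  set a := Real.sin x / x with ha
  set b := (1 - Real.cos x) / x ^ 2 with hb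
  have hcomp : (WithLp.equiv 2 (E3 × E3)) (Pp x w) = (ev x, wv w) :=
    Equiv.apply_symm_apply _ _
  rw [Jstar, hcomp]
  dsimp only
  rw [seX_eq, hexp]
  have htp : tPart (1 + a • Am x w + b • (Am x w) ^ 2)
      = (WithLp.equiv 2 (Fin 3 → ℝ)).symm ![0, a * w, b * (x * w)] := by
    rw [tPart, Am_sq]
    congr 1
    funext i
    fin_cases i <;>
      simp [Am, Matrix.one_apply, Fin.castSucc, Fin.last, Matrix.vecHead, Matrix.vecTail,
        Fin.castAdd, Fin.castLE] <;> ring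
  rw [htp]
  have hnorm : ‖(WithLp.equiv 2 (Fin 3 → ℝ)).symm ![0, a * w, b * (x * w)]‖ ^ 2
      = (a * w) ^ 2 + (b * (x * w)) ^ 2 := by
    rw [EuclideanSpace.norm_eq]
    rw [Real.sq_sqrt (by positivity)]
    simp [Fin.sum_univ_three, WithLp.equiv_symm_apply, PiLp.toLp_apply, sq_abs]
  rw [hnorm, ha, hb]
  have key := Real.sin_sq_add_cos_sq x
  field_simp
  linear_combination (w ^ 2) * key

noncomputable instance D6.continuousSMul : ContinuousSMul ℝ D6 := inferInstance

lemma hat_add (ω ω' : E3) : hat (ω + ω') = hat ω + hat ω' := by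
  ext i j
  fin_cases i <;> fin_cases j <;> simp [hat, PiLp.add_apply] <;> ring

lemma hat_smul (c : ℝ) (ω : E3) : hat (c • ω) = c • hat ω := by
  ext i j
  fin_cases i <;> fin_cases j <;> simp [hat, PiLp.smul_apply] <;> ring

noncomputable def seXlin : (E3 × E3) →ₗ[ℝ] Matrix (Fin 4) (Fin 4) ℝ where
  toFun p := seX p.1 p.2
  map_add' p q := by
    ext i j
    simp only [seX, Matrix.of_apply, Matrix.add_apply]
    by_cases hi : (i : ℕ) < 3
    · by_cases hj : (j : ℕ) < 3
      · simp [hi, hj, hat_add, Matrix.add_apply]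
      · simp [hi, hj, PiLp.add_apply]
    · simp [hi]
  map_smul' c p := by
    ext i j
    simp only [seX, Matrix.of_apply, Matrix.smul_apply, RingHom.id_apply]
    by_cases hi : (i : ℕ) < 3
    · by_cases hj : (j : ℕ) < 3
      · simp [hi, hj, hat_smul, Matrix.smul_apply]
      · simp [hi, hj, PiLp.smul_apply]
    · simp [hi]

noncomputable def tPartlin : Matrix (Fin 4) (Fin 4) ℝ →ₗ[ℝ] E3 :=
  ((WithLp.linearEquiv 2 ℝ (Fin 3 → ℝ)).symm.toLinearMap) ∘ₗ
    ({ toFun := fun g => fun i : Fin 3 => g i.castSucc (Fin.last 3)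
       map_add' := fun _ _ => rfl
       map_smul' := fun _ _ => rfl } : Matrix (Fin 4) (Fin 4) ℝ →ₗ[ℝ] (Fin 3 → ℝ))

set_option maxHeartbeats 1000000 in
lemma Jstar_differentiable : Differentiable ℝ Jstar := by
  letI : SeminormedRing (Matrix (Fin 4) (Fin 4) ℝ) := Matrix.linftyOpSemiNormedRing
  letI : NormedRing (Matrix (Fin 4) (Fin 4) ℝ) := Matrix.linftyOpNormedRing
  letI : NormedAlgebra ℝ (Matrix (Fin 4) (Fin 4) ℝ) := Matrix.linftyOpNormedAlgebra
  have hexp : Differentiable ℝ (NormedSpace.exp : Matrix (Fin 4) (Fin 4) ℝ → _) :=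
    fun x => (NormedSpace.exp_analytic x).differentiableAt
  set bigL : D6 →ₗ[ℝ] Matrix (Fin 4) (Fin 4) ℝ :=
    seXlin.comp (WithLp.linearEquiv 2 ℝ (E3 × E3)).toLinearMap with hbigL
  have hF : Differentiable ℝ (fun θ : D6 =>
      tPart (NormedSpace.exp (seX (WithLp.equiv 2 (E3 × E3) θ).1 (WithLp.equiv 2 (E3 × E3) θ).2))) := by
    have h1 : Differentiable ℝ (fun θ : D6 => bigL θ) :=
      bigL.toContinuousLinearMap.differentiable
    have h2 : Differentiable ℝ (fun θ : D6 => tPartlin (NormedSpace.exp (bigL θ))) :=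
      tPartlin.toContinuousLinearMap.differentiable.comp (hexp.comp h1)
    have heq : (fun θ : D6 =>
        tPart (NormedSpace.exp (seX (WithLp.equiv 2 (E3 × E3) θ).1 (WithLp.equiv 2 (E3 × E3) θ).2)))
        = fun θ : D6 => tPartlin (NormedSpace.exp (bigL θ)) := by
      funext θ
      rfl
    rw [heq]
    exact h2
  have hJ : Jstar = fun θ : D6 => (1 / 2) *
      ⟪tPart (NormedSpace.exp (seX (WithLp.equiv 2 (E3 × E3) θ).1 (WithLp.equiv 2 (E3 × E3) θ).2)),
        tPart (NormedSpace.exp (seX (WithLp.equiv 2 (E3 × E3) θ).1 (WithLp.equiv 2 (E3 × E3) θ).2))⟫ := by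
    funext θ
    rw [Jstar, real_inner_self_eq_norm_sq]
  rw [hJ]
  exact (hF.inner ℝ hF).const_mul _

lemma ev_comb (a s b : ℝ) : ev a + s • ev b = ev (a + s * b) := by
  ext i
  fin_cases i <;>
    simp [ev, PiLp.add_apply, PiLp.smul_apply, WithLp.equiv_symm_apply, PiLp.toLp_apply]

lemma wv_comb (a s b : ℝ) : wv a + s • wv b = wv (a + s * b) := by
  ext i
  fin_cases i <;>
    simp [wv, PiLp.add_apply, PiLp.smul_apply, WithLp.equiv_symm_apply, PiLp.toLp_apply]

lemma ev_sub (a b : ℝ) : ev a - ev b = ev (a - b) := by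
  ext i
  fin_cases i <;>
    simp [ev, PiLp.sub_apply, WithLp.equiv_symm_apply, PiLp.toLp_apply]

lemma wv_sub (a b : ℝ) : wv a - wv b = wv (a - b) := by
  ext i
  fin_cases i <;>
    simp [wv, PiLp.sub_apply, WithLp.equiv_symm_apply, PiLp.toLp_apply]

lemma Pp_line (x w s : ℝ) : Pp x w + s • Pp 1 0 = Pp (x + s) w := by
  rw [Pp, Pp, Pp, WithLp.equiv_symm_apply, ← WithLp.toLp_smul, ← WithLp.toLp_add]
  congr 1
  rw [Prod.smul_mk, Prod.mk_add_mk]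
  rw [ev_comb, wv_comb]
  norm_num

lemma Pp_sub (x w x' w' : ℝ) : Pp x w - Pp x' w' = Pp (x - x') (w - w') := by
  rw [Pp, Pp, Pp, WithLp.equiv_symm_apply, ← WithLp.toLp_sub]
  congr 1
  rw [Prod.mk_sub_mk, ev_sub, wv_sub]

lemma ev_norm_sq (x : ℝ) : ‖ev x‖ ^ 2 = x ^ 2 := by
  rw [EuclideanSpace.norm_eq, Real.sq_sqrt (by positivity)]
  simp [Fin.sum_univ_three, ev, WithLp.equiv_symm_apply, PiLp.toLp_apply, sq_abs]

lemma wv_norm_sq (w : ℝ) : ‖wv w‖ ^ 2 = w ^ 2 := by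
  rw [EuclideanSpace.norm_eq, Real.sq_sqrt (by positivity)]
  simp [Fin.sum_univ_three, wv, WithLp.equiv_symm_apply, PiLp.toLp_apply, sq_abs]

lemma Pp_norm (x w : ℝ) : ‖Pp x w‖ = Real.sqrt (x ^ 2 + w ^ 2) := by
  rw [Pp, WithLp.prod_norm_eq_of_L2]
  congr 1
  rw [WithLp.equiv_symm_apply, WithLp.toLp_fst, WithLp.toLp_snd]
  rw [ev_norm_sq, wv_norm_sq]

set_option maxHeartbeats 1000000 in
/-- The directional derivative of `Jstar` along `((1,0,0),0)` at `Pp x w`. -/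
lemma fderiv_Jstar_dir (x w : ℝ) (hx : x ≠ 0) :
    fderiv ℝ Jstar (Pp x w) (Pp 1 0)
      = (w ^ 2 * Real.sin x * x ^ 2 - w ^ 2 * (1 - Real.cos x) * (2 * x)) / x ^ 4 := by
  have hcurve : HasDerivAt (fun s : ℝ => Pp x w + s • Pp 1 0) (Pp 1 0) 0 := by
    have h := ((hasDerivAt_id (0 : ℝ)).smul_const (Pp 1 0)).const_add (Pp x w)
    simpa using h
  have h0 : Pp x w + (0 : ℝ) • Pp 1 0 = Pp x w := by simp
  have hcomp : HasDerivAt (fun s : ℝ => Jstar (Pp x w + s • Pp 1 0))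
      (fderiv ℝ Jstar (Pp x w) (Pp 1 0)) 0 := by
    have h := ((Jstar_differentiable
      (Pp x w + (0 : ℝ) • Pp 1 0)).hasFDerivAt).comp_hasDerivAt 0 hcurve
    rw [h0] at h
    simpa [Function.comp_def] using h
  have heq : (fun s : ℝ => Jstar (Pp x w + s • Pp 1 0))
      =ᶠ[nhds 0] fun s => w ^ 2 * (1 - Real.cos (x + s)) / (x + s) ^ 2 := by
    have hmem : Set.Ioo (-|x|) |x| ∈ nhds (0 : ℝ) :=
      Ioo_mem_nhds (neg_lt_zero.2 (abs_pos.2 hx)) (abs_pos.2 hx)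
    filter_upwards [hmem] with s hs
    have hxs : x + s ≠ 0 := by
      obtain ⟨h1, h2⟩ := hs
      intro hc
      rcases abs_cases x with ⟨he, _⟩ | ⟨he, _⟩ <;> nlinarith
    rw [Pp_line, Jstar_P _ _ hxs]
  have hcomp' : HasDerivAt (fun s => w ^ 2 * (1 - Real.cos (x + s)) / (x + s) ^ 2)
      (fderiv ℝ Jstar (Pp x w) (Pp 1 0)) 0 := hcomp.congr_of_eventuallyEq heq.symm
  have h1 : HasDerivAt (fun s : ℝ => x + s) 1 0 := (hasDerivAt_id 0).const_add x
  have hN : HasDerivAt (fun s : ℝ => w ^ 2 * (1 - Real.cos (x + s)))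
      (w ^ 2 * Real.sin (x + 0)) 0 := by
    have := (h1.cos.const_sub 1).const_mul (w ^ 2)
    refine this.congr_deriv ?_
    simp
  have hD : HasDerivAt (fun s : ℝ => (x + s) ^ 2) (2 * (x + 0)) 0 := by
    have := h1.pow 2
    norm_num at this
    exact (this.congr_of_eventuallyEq (Filter.Eventually.of_forall fun s => by simp)).congr_deriv (by simp)
  have hG : HasDerivAt (fun s => w ^ 2 * (1 - Real.cos (x + s)) / (x + s) ^ 2)
      ((w ^ 2 * Real.sin (x + 0) * (x + 0) ^ 2
        - w ^ 2 * (1 - Real.cos (x + 0)) * (2 * (x + 0))) / ((x + 0) ^ 2) ^ 2) 0 := by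
    refine hN.div hD ?_
    simpa using pow_ne_zero 2 hx
  have huniq := hcomp'.unique hG
  rw [huniq]
  simp only [add_zero]
  ring

end Aux

lemma exp_I_approx : ‖Complex.exp Complex.I
    - ((389 : ℝ) / 720 + (4241 : ℝ) / 5040 * Complex.I)‖ ≤ 9 / 322560 := by
  have h := Complex.exp_bound (x := Complex.I) (by simp) (n := 8) (by norm_num)
  have hsum : (∑ m ∈ Finset.range 8, Complex.I ^ m / m.factorial)
      = ((389 : ℝ) / 720 + (4241 : ℝ) / 5040 * Complex.I) := by
    simp [Finset.sum_range_succ, pow_succ, Complex.I_mul_I, Nat.factorial]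
    rw [Complex.ext_iff]
    norm_num [Complex.div_re, Complex.div_im, Complex.normSq]
  rw [hsum] at h
  calc ‖_‖ ≤ _ := h
    _ ≤ 9 / 322560 := by
        rw [Complex.norm_I]
        norm_num [Nat.factorial]

lemma cos_one_bounds : (0.5402 : ℝ) ≤ Real.cos 1 ∧ Real.cos 1 ≤ 0.5404 := by
  have h := exp_I_approx
  have hre : (Complex.exp Complex.I - ((389 : ℝ) / 720 + (4241 : ℝ) / 5040 * Complex.I)).re
      = Real.cos 1 - 389 / 720 := by
    have : Complex.exp Complex.I = Complex.exp ((1 : ℝ) * Complex.I) := by norm_num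
    rw [Complex.sub_re, this, Complex.exp_ofReal_mul_I_re]
    norm_num
  have habs : |Real.cos 1 - 389 / 720| ≤ 9 / 322560 := by
    rw [← hre]
    exact (Complex.abs_re_le_norm _).trans h
  rw [abs_le] at habs
  constructor <;> nlinarith [habs.1, habs.2]

lemma sin_one_bounds : (0.8414 : ℝ) ≤ Real.sin 1 ∧ Real.sin 1 ≤ 0.8416 := by
  have h := exp_I_approx
  have him : (Complex.exp Complex.I - ((389 : ℝ) / 720 + (4241 : ℝ) / 5040 * Complex.I)).im
      = Real.sin 1 - 4241 / 5040 := by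
    have : Complex.exp Complex.I = Complex.exp ((1 : ℝ) * Complex.I) := by norm_num
    rw [Complex.sub_im, this, Complex.exp_ofReal_mul_I_im]
    norm_num
  have habs : |Real.sin 1 - 4241 / 5040| ≤ 9 / 322560 := by
    rw [← him]
    exact (Complex.abs_im_le_norm _).trans h
  rw [abs_le] at habs
  constructor <;> nlinarith [habs.1, habs.2]

set_option maxHeartbeats 1000000 in
theorem stmt19 (R L' : ℝ) (hR : 2 ≤ R) (hL' : 0 ≤ L')
    (hLip : ∀ θ θ' : D6, ‖θ‖ ≤ R → ‖θ'‖ ≤ R →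
      ‖gradient Jstar θ - gradient Jstar θ'‖ ≤ L' * ‖θ - θ'‖) :
    L' ≥ 3 / 8 * (8 * Real.sin 1 + 10 * Real.cos 1 - 12) * R ^ 2 ∧
    L' ≥ 0.0505 * R ^ 2 := by
  obtain ⟨hc1l, hc1u⟩ := cos_one_bounds
  obtain ⟨hs1l, hs1u⟩ := sin_one_bounds
  set y := Real.sqrt (R ^ 2 - 1) with hy
  have hR2 : (4 : ℝ) ≤ R ^ 2 := by nlinarith
  have hy2 : y ^ 2 = R ^ 2 - 1 := Real.sq_sqrt (by nlinarith)
  have hd1 : fderiv ℝ Jstar (Pp 1 y) (Pp 1 0)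
      = y ^ 2 * (Real.sin 1 + 2 * Real.cos 1 - 2) := by
    rw [fderiv_Jstar_dir 1 y one_ne_zero]
    norm_num
    ring
  have hd2 : fderiv ℝ Jstar (Pp (-1) y) (Pp 1 0)
      = -(y ^ 2 * (Real.sin 1 + 2 * Real.cos 1 - 2)) := by
    rw [fderiv_Jstar_dir (-1) y (by norm_num)]
    norm_num [Real.sin_neg, Real.cos_neg]
    ring
  have hgrad : ∀ θ : D6, (inner ℝ (gradient Jstar θ) (Pp 1 0) : ℝ) = fderiv ℝ Jstar θ (Pp 1 0) := by
    intro θ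
    have h := (Jstar_differentiable θ).hasGradientAt
    have hfd := hasGradientAt_iff_hasFDerivAt.1 h
    rw [hfd.fderiv, InnerProductSpace.toDual_apply_apply]
  have hkey : (inner ℝ (gradient Jstar (Pp 1 y) - gradient Jstar (Pp (-1) y)) (Pp 1 0) : ℝ)
      = 2 * (y ^ 2 * (Real.sin 1 + 2 * Real.cos 1 - 2)) := by
    rw [inner_sub_left, hgrad _, hgrad _, hd1, hd2]
    ring
  have hn1 : ‖Pp 1 y‖ = R := by
    rw [Pp_norm, hy2]
    have h : (1 : ℝ) ^ 2 + (R ^ 2 - 1) = R ^ 2 := by ring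
    rw [h]
    exact Real.sqrt_sq (by linarith)
  have hn2 : ‖Pp (-1) y‖ = R := by
    rw [Pp_norm, hy2]
    have h : (-1 : ℝ) ^ 2 + (R ^ 2 - 1) = R ^ 2 := by ring
    rw [h]
    exact Real.sqrt_sq (by linarith)
  have hnd : ‖Pp 1 y - Pp (-1) y‖ = 2 := by
    rw [Pp_sub, Pp_norm]
    have h : (1 - -1 : ℝ) ^ 2 + (y - y) ^ 2 = 2 ^ 2 := by ring
    rw [h]
    exact Real.sqrt_sq (by norm_num)
  have hu : ‖Pp 1 0‖ = 1 := by
    rw [Pp_norm]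
    have h : (1 : ℝ) ^ 2 + 0 ^ 2 = 1 ^ 2 := by ring
    rw [h]
    exact Real.sqrt_sq (by norm_num)
  have hlip := hLip (Pp 1 y) (Pp (-1) y) (le_of_eq hn1) (le_of_eq hn2)
  rw [hnd] at hlip
  have habs := abs_real_inner_le_norm
    (gradient Jstar (Pp 1 y) - gradient Jstar (Pp (-1) y)) (Pp 1 0)
  rw [hkey, hu, mul_one] at habs
  have hflip : |2 * (y ^ 2 * (Real.sin 1 + 2 * Real.cos 1 - 2))|
      = 2 * (y ^ 2 * (2 - 2 * Real.cos 1 - Real.sin 1)) := by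
    rw [abs_of_nonpos (by nlinarith [sq_nonneg y])]
    ring
  rw [hflip] at habs
  have hmain : (R ^ 2 - 1) * (2 - 2 * Real.cos 1 - Real.sin 1) ≤ L' := by
    nlinarith [habs.trans hlip, hy2]
  constructor
  · have hu4 : (0 : ℝ) ≤ (R ^ 2 - 4) * (6.5 - 5.75 * Real.cos 1 - 4 * Real.sin 1) :=
      mul_nonneg (by linarith) (by nlinarith)
    nlinarith [hmain, hu4, hc1l, hc1u, hs1l, hs1u]
  · have hu5 : (0 : ℝ) ≤ (R ^ 2 - 4) * (2 - 2 * Real.cos 1 - Real.sin 1 - 0.0505) :=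
      mul_nonneg (by linarith) (by nlinarith)
    nlinarith [hmain, hu5, hc1l, hc1u, hs1l, hs1u]
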